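/- (Implied density identity.) Let τ > 0, F > 0 and let v : ℝ → (0,∞) be twice differentiable. Define the call price in strike coordinates C : (0,∞) → ℝ by C(K) = F · BS(τ, log(K/F), v(log(K/F))). Then C is twice differentiable and for every K > 0, writing k = log(K/F), C''(K) = [φ(d2(τ,k,v(k))) / (K · v(k) · √τ)] · But(τ, k, v(k), v'(k), v''(k)). -/

import Mathlib

open Real Filter Set

/-- Standard normal probability density function. -/
noncomputable def stdGaussPDF (x : ℝ) : ℝ :=
  (Real.sqrt (2 * Real.pi))⁻¹ * Real.exp (-(x ^ 2) / 2)

/-- Standard normal cumulative distribution function. -/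
noncomputable def stdGaussCDF (x : ℝ) : ℝ :=
  ∫ t in Set.Iic x, stdGaussPDF t

/-- d1 term of the Black–Scholes formula. -/
noncomputable def d1 (τ k v : ℝ) : ℝ :=
  -k / (v * Real.sqrt τ) + v * Real.sqrt τ / 2

/-- d2 term of the Black–Scholes formula. -/
noncomputable def d2 (τ k v : ℝ) : ℝ :=
  -k / (v * Real.sqrt τ) - v * Real.sqrt τ / 2

/-- Black–Scholes call price in units of the forward. -/
noncomputable def BS (τ k v : ℝ) : ℝ :=
  stdGaussCDF (d1 τ k v) - Real.exp k * stdGaussCDF (d2 τ k v)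

/-- The butterfly functional. -/
noncomputable def But (τ k v₀ v₁ v₂ : ℝ) : ℝ :=
  (1 + d1 τ k v₀ * v₁ * Real.sqrt τ) * (1 + d2 τ k v₀ * v₁ * Real.sqrt τ) + v₀ * v₂ * τ

lemma stdGaussPDF_integrable : MeasureTheory.Integrable stdGaussPDF := by
  have h : stdGaussPDF = fun x => (Real.sqrt (2 * Real.pi))⁻¹ * Real.exp (-(1/2 : ℝ) * x ^ 2) := by
    funext x; unfold stdGaussPDF; ring_nf
  rw [h]
  exact (integrable_exp_neg_mul_sq (by norm_num)).const_mul _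

lemma stdGaussPDF_continuous : Continuous stdGaussPDF := by
  unfold stdGaussPDF; fun_prop

lemma hasDerivAt_stdGaussCDF (x : ℝ) : HasDerivAt stdGaussCDF (stdGaussPDF x) x := by
  have key : ∀ y : ℝ, stdGaussCDF y = stdGaussCDF 0 + ∫ t in (0:ℝ)..y, stdGaussPDF t := by
    intro y
    have := intervalIntegral.integral_Iic_sub_Iic (μ := MeasureTheory.volume)
      (f := stdGaussPDF) (stdGaussPDF_integrable.integrableOn) (stdGaussPDF_integrable.integrableOn)
      (a := 0) (b := y)
    unfold stdGaussCDF
    linarith [this]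
  have h2 : HasDerivAt (fun y => stdGaussCDF 0 + ∫ t in (0:ℝ)..y, stdGaussPDF t)
      (stdGaussPDF x) x := by
    have := intervalIntegral.integral_hasDerivAt_right
      (stdGaussPDF_continuous.intervalIntegrable 0 x)
      (stdGaussPDF_continuous.stronglyMeasurableAtFilter _ _)
      (stdGaussPDF_continuous.continuousAt)
    exact this.const_add _
  exact h2.congr_of_eventuallyEq (Filter.Eventually.of_forall key)

lemma hasDerivAt_stdGaussPDF (x : ℝ) :
    HasDerivAt stdGaussPDF (-x * stdGaussPDF x) x := by
  have h1 : HasDerivAt (fun y : ℝ => -(y ^ 2) / 2) (-x) x := by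
    have := ((hasDerivAt_pow 2 x).neg).div_const 2
    exact this.congr_deriv (by norm_num; ring)
  have h2 := (h1.exp).const_mul ((Real.sqrt (2 * Real.pi))⁻¹)
  unfold stdGaussPDF
  exact h2.congr_deriv (by ring)



lemma pdf_d1_eq (τ k vv : ℝ) (h : vv * Real.sqrt τ ≠ 0) :
    stdGaussPDF (d1 τ k vv) = Real.exp k * stdGaussPDF (d2 τ k vv) := by
  have harg : -(d1 τ k vv ^ 2) / 2 = k + -(d2 τ k vv ^ 2) / 2 := by
    obtain ⟨hv0, hs0⟩ := mul_ne_zero_iff.mp h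
    unfold d1 d2; field_simp; ring
  unfold stdGaussPDF
  rw [harg, Real.exp_add]; ring



/-- common part of the derivatives of d1, d2 in k. -/
noncomputable def dd (τ : ℝ) (v v' : ℝ → ℝ) (k : ℝ) : ℝ :=
  (-1 * (v k * Real.sqrt τ) - -k * (v' k * Real.sqrt τ)) / (v k * Real.sqrt τ) ^ 2

section helpers

variable {τ : ℝ} {v v' v'' : ℝ → ℝ}

lemma hd1_lem (hτ : 0 < τ) (hv : ∀ k, 0 < v k) (hv' : ∀ k, HasDerivAt v (v' k) k) (k : ℝ) :
    HasDerivAt (fun x => d1 τ x (v x)) (dd τ v v' k + v' k * Real.sqrt τ / 2) k := by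
  have hs : 0 < Real.sqrt τ := Real.sqrt_pos.mpr hτ
  have hvs : v k * Real.sqrt τ ≠ 0 := mul_ne_zero (hv k).ne' hs.ne'
  have h1 : HasDerivAt (fun x : ℝ => -x) (-1) k := (hasDerivAt_id k).neg
  have h2 : HasDerivAt (fun x => v x * Real.sqrt τ) (v' k * Real.sqrt τ) k := (hv' k).mul_const _
  have h3 := h1.div h2 hvs
  have h4 := h2.div_const 2
  have h5 := h3.add h4
  simp only [d1, dd]
  exact h5

lemma hd2_lem (hτ : 0 < τ) (hv : ∀ k, 0 < v k) (hv' : ∀ k, HasDerivAt v (v' k) k) (k : ℝ) :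
    HasDerivAt (fun x => d2 τ x (v x)) (dd τ v v' k - v' k * Real.sqrt τ / 2) k := by
  have hs : 0 < Real.sqrt τ := Real.sqrt_pos.mpr hτ
  have hvs : v k * Real.sqrt τ ≠ 0 := mul_ne_zero (hv k).ne' hs.ne'
  have h1 : HasDerivAt (fun x : ℝ => -x) (-1) k := (hasDerivAt_id k).neg
  have h2 : HasDerivAt (fun x => v x * Real.sqrt τ) (v' k * Real.sqrt τ) k := (hv' k).mul_const _
  have h3 := h1.div h2 hvs
  have h4 := h2.div_const 2
  have h5 := h3.sub h4
  simp only [d2, dd]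
  exact h5

/-- derivative of k ↦ BS(τ,k,v(k)) in simplified form. -/
lemma hBS_lem (hτ : 0 < τ) (hv : ∀ k, 0 < v k) (hv' : ∀ k, HasDerivAt v (v' k) k) (k : ℝ) :
    HasDerivAt (fun x => BS τ x (v x))
      (Real.exp k * (stdGaussPDF (d2 τ k (v k)) * (v' k * Real.sqrt τ))
        - Real.exp k * stdGaussCDF (d2 τ k (v k))) k := by
  have hs : 0 < Real.sqrt τ := Real.sqrt_pos.mpr hτ
  have hvs : v k * Real.sqrt τ ≠ 0 := mul_ne_zero (hv k).ne' hs.ne'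
  have hΦ1 := (hasDerivAt_stdGaussCDF (d1 τ k (v k))).comp k (hd1_lem hτ hv hv' k)
  have hΦ2 := (hasDerivAt_stdGaussCDF (d2 τ k (v k))).comp k (hd2_lem hτ hv hv' k)
  have hE := (Real.hasDerivAt_exp k).mul hΦ2
  have h5 := hΦ1.sub hE
  have heq : stdGaussPDF (d1 τ k (v k)) * (dd τ v v' k + v' k * Real.sqrt τ / 2) -
      (Real.exp k * stdGaussCDF (d2 τ k (v k)) +
        Real.exp k * (stdGaussPDF (d2 τ k (v k)) * (dd τ v v' k - v' k * Real.sqrt τ / 2)))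
      = Real.exp k * (stdGaussPDF (d2 τ k (v k)) * (v' k * Real.sqrt τ))
        - Real.exp k * stdGaussCDF (d2 τ k (v k)) := by
    rw [pdf_d1_eq τ k (v k) hvs]
    ring
  rw [← heq]
  exact h5

/-- derivative of k ↦ φ(d2)·v'·√τ − Φ(d2) equals (φ(d2)/(v√τ))·But. -/
lemma hg_lem (hτ : 0 < τ) (hv : ∀ k, 0 < v k) (hv' : ∀ k, HasDerivAt v (v' k) k)
    (hv'' : ∀ k, HasDerivAt v' (v'' k) k) (k : ℝ) :
    HasDerivAt (fun x => stdGaussPDF (d2 τ x (v x)) * (v' x * Real.sqrt τ)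
        - stdGaussCDF (d2 τ x (v x)))
      (stdGaussPDF (d2 τ k (v k)) / (v k * Real.sqrt τ) *
        But τ k (v k) (v' k) (v'' k)) k := by
  have hs : 0 < Real.sqrt τ := Real.sqrt_pos.mpr hτ
  have hvs : v k * Real.sqrt τ ≠ 0 := mul_ne_zero (hv k).ne' hs.ne'
  have hφ := (hasDerivAt_stdGaussPDF (d2 τ k (v k))).comp k (hd2_lem hτ hv hv' k)
  have hA := hφ.mul ((hv'' k).mul_const (Real.sqrt τ))
  have hB := (hasDerivAt_stdGaussCDF (d2 τ k (v k))).comp k (hd2_lem hτ hv hv' k)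
  have h5 := hA.sub hB
  have heq : -(d2 τ k (v k)) * stdGaussPDF (d2 τ k (v k)) * (dd τ v v' k - v' k * Real.sqrt τ / 2)
        * (v' k * Real.sqrt τ)
      + stdGaussPDF (d2 τ k (v k)) * (v'' k * Real.sqrt τ)
      - stdGaussPDF (d2 τ k (v k)) * (dd τ v v' k - v' k * Real.sqrt τ / 2)
      = stdGaussPDF (d2 τ k (v k)) / (v k * Real.sqrt τ) *
        But τ k (v k) (v' k) (v'' k) := by
    simp only [But, d1, d2, dd]
    have hτeq : τ = Real.sqrt τ ^ 2 := (Real.sq_sqrt hτ.le).symm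
    generalize hgen : Real.sqrt τ = s at *
    rw [hτeq]
    have hvk : v k ≠ 0 := (hv k).ne'
    have hs0 : s ≠ 0 := hs.ne'
    field_simp
    ring
  rw [← heq]
  exact h5

end helpers

theorem stmt10 (τ F : ℝ) (hτ : 0 < τ) (hF : 0 < F)
    (v v' v'' : ℝ → ℝ) (hv : ∀ k, 0 < v k)
    (hv' : ∀ k, HasDerivAt v (v' k) k)
    (hv'' : ∀ k, HasDerivAt v' (v'' k) k) :
    ∃ C' : ℝ → ℝ,
      (∀ K, 0 < K →
        HasDerivAt (fun K' => F * BS τ (Real.log (K' / F)) (v (Real.log (K' / F))))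
          (C' K) K) ∧
      (∀ K, 0 < K →
        HasDerivAt C'
          (stdGaussPDF (d2 τ (Real.log (K / F)) (v (Real.log (K / F)))) /
              (K * v (Real.log (K / F)) * Real.sqrt τ) *
            But τ (Real.log (K / F)) (v (Real.log (K / F)))
              (v' (Real.log (K / F))) (v'' (Real.log (K / F)))) K) := by
  have hs : 0 < Real.sqrt τ := Real.sqrt_pos.mpr hτ
  refine ⟨fun K => stdGaussPDF (d2 τ (Real.log (K / F)) (v (Real.log (K / F)))) *
      (v' (Real.log (K / F)) * Real.sqrt τ) -
      stdGaussCDF (d2 τ (Real.log (K / F)) (v (Real.log (K / F)))), ?_, ?_⟩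
  · intro K hK
    have hKF : K / F ≠ 0 := (div_pos hK hF).ne'
    have hdiv : HasDerivAt (fun K' : ℝ => K' / F) (1 / F) K := by
      simpa using (hasDerivAt_id K).div_const F
    have hlog : HasDerivAt (fun K' => Real.log (K' / F)) ((K / F)⁻¹ * (1 / F)) K :=
      by have := (Real.hasDerivAt_log hKF).comp K hdiv; exact this
    have hC := ((hBS_lem hτ hv hv' (Real.log (K / F))).comp K hlog).const_mul F
    have hexp : Real.exp (Real.log (K / F)) = K / F := Real.exp_log (div_pos hK hF)
    have heq : F * ((Real.exp (Real.log (K / F)) *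
          (stdGaussPDF (d2 τ (Real.log (K / F)) (v (Real.log (K / F)))) *
            (v' (Real.log (K / F)) * Real.sqrt τ)) -
        Real.exp (Real.log (K / F)) *
          stdGaussCDF (d2 τ (Real.log (K / F)) (v (Real.log (K / F))))) *
        ((K / F)⁻¹ * (1 / F)))
        = stdGaussPDF (d2 τ (Real.log (K / F)) (v (Real.log (K / F)))) *
          (v' (Real.log (K / F)) * Real.sqrt τ) -
          stdGaussCDF (d2 τ (Real.log (K / F)) (v (Real.log (K / F)))) := by
      rw [hexp]
      field_simp
    show HasDerivAt _ (stdGaussPDF (d2 τ (Real.log (K / F)) (v (Real.log (K / F)))) *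
      (v' (Real.log (K / F)) * Real.sqrt τ) -
      stdGaussCDF (d2 τ (Real.log (K / F)) (v (Real.log (K / F))))) K
    rw [← heq]
    exact hC
  · intro K hK
    have hKF : K / F ≠ 0 := (div_pos hK hF).ne'
    have hdiv : HasDerivAt (fun K' : ℝ => K' / F) (1 / F) K := by
      simpa using (hasDerivAt_id K).div_const F
    have hlog : HasDerivAt (fun K' => Real.log (K' / F)) ((K / F)⁻¹ * (1 / F)) K :=
      by have := (Real.hasDerivAt_log hKF).comp K hdiv; exact this
    have hC := (hg_lem hτ hv hv' hv'' (Real.log (K / F))).comp K hlog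
    have heq : stdGaussPDF (d2 τ (Real.log (K / F)) (v (Real.log (K / F)))) /
          (v (Real.log (K / F)) * Real.sqrt τ) *
          But τ (Real.log (K / F)) (v (Real.log (K / F)))
            (v' (Real.log (K / F))) (v'' (Real.log (K / F))) *
          ((K / F)⁻¹ * (1 / F))
        = stdGaussPDF (d2 τ (Real.log (K / F)) (v (Real.log (K / F)))) /
            (K * v (Real.log (K / F)) * Real.sqrt τ) *
          But τ (Real.log (K / F)) (v (Real.log (K / F)))
            (v' (Real.log (K / F))) (v'' (Real.log (K / F))) := by
      have h1 : v (Real.log (K / F)) ≠ 0 := (hv _).ne'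
      field_simp
    rw [← heq]
    exact hC
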